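/- arXiv:2005.05108 — 3 statements merged into one kernel-verified Lean document; each statement's English description precedes it below -/
import Mathlib

section
/- Let G₁ and G₂ be finite acyclic graphs (in the AINOA formalism) and let M be a nodeless graph (a finite set of isolated edges) equipped with injections of M onto a subset of the out-boundary of G₁ and onto a subset of the in-boundary of G₂. Then the componentwise pushout G₁ ⊔_M G₂ (computed as pushouts of finite sets along injections on each of the components A, I, N, O) is again a graph, i.e. its outer maps are injective; moreover if the injections are bijections onto the full out-boundary of G₁ and full in-boundary of G₂, then the in-boundary of the pushout equals the in-boundary of G₁ and its out-boundary equals the out-boundary of G₂. -/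
/-- A whole-grain Petri net: a diagram of finite sets `S ← I → T ← O → S`. -/
structure PetriNet where
  S : Type
  I : Type
  T : Type
  O : Type
  [finS : Finite S]
  [finI : Finite I]
  [finT : Finite T]
  [finO : Finite O]
  sI : I → S
  tI : I → T
  tO : O → T
  sO : O → S

/-- A graph (AINOA style): a diagram of finite sets `A ← A_N → N ← _N A → A`
with the outer maps injective. -/
structure AinoaGraph where
  A : Type
  AN : Type
  N : Type
  NA : Type
  [finA : Finite A]
  [finAN : Finite AN]
  [finN : Finite N]
  [finNA : Finite NA]
  srcEdge : AN → A
  srcNode : AN → N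
  tgtNode : NA → N
  tgtEdge : NA → A
  inj_srcEdge : Function.Injective srcEdge
  inj_tgtEdge : Function.Injective tgtEdge

/-- `x ⋖ y`: there is an inner edge from node `x` to node `y`. -/
def AinoaGraph.prec (G : AinoaGraph) (x y : G.N) : Prop :=
  ∃ (o : G.NA) (i : G.AN), G.tgtNode o = x ∧ G.srcNode i = y ∧ G.tgtEdge o = G.srcEdge i

/-- Acyclicity: no directed cycles. -/
def AinoaGraph.Acyclic (G : AinoaGraph) : Prop := ∀ x : G.N, ¬ Relation.TransGen G.prec x x

/-- In-boundary: edges not outgoing of any node. -/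
def AinoaGraph.inBoundary (G : AinoaGraph) : Set G.A := {a | a ∉ Set.range G.tgtEdge}

/-- Out-boundary: edges not incoming to any node. -/
def AinoaGraph.outBoundary (G : AinoaGraph) : Set G.A := {a | a ∉ Set.range G.srcEdge}

/-- An etale map from a graph `G` to a Petri net `P`: componentwise maps with the
two middle squares pullbacks. -/
structure EtaleMap (G : AinoaGraph) (P : PetriNet) where
  mapA : G.A → P.S
  mapI : G.AN → P.I
  mapN : G.N → P.T
  mapO : G.NA → P.O
  comm_sI : ∀ m, P.sI (mapI m) = mapA (G.srcEdge m)
  comm_tI : ∀ m, P.tI (mapI m) = mapN (G.srcNode m)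
  comm_tO : ∀ o, P.tO (mapO o) = mapN (G.tgtNode o)
  comm_sO : ∀ o, P.sO (mapO o) = mapA (G.tgtEdge o)
  etale_in : ∀ (x : G.N) (i : P.I), P.tI i = mapN x →
      ∃! m : G.AN, G.srcNode m = x ∧ mapI m = i
  etale_out : ∀ (x : G.N) (o : P.O), P.tO o = mapN x →
      ∃! m : G.NA, G.tgtNode m = x ∧ mapO m = o

/-- An etale map of graphs: componentwise maps with the two middle squares pullbacks. -/
structure GraphMap (G H : AinoaGraph) where
  mapA : G.A → H.A
  mapAN : G.AN → H.AN
  mapN : G.N → H.N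
  mapNA : G.NA → H.NA
  comm_srcEdge : ∀ m, H.srcEdge (mapAN m) = mapA (G.srcEdge m)
  comm_srcNode : ∀ m, H.srcNode (mapAN m) = mapN (G.srcNode m)
  comm_tgtNode : ∀ o, H.tgtNode (mapNA o) = mapN (G.tgtNode o)
  comm_tgtEdge : ∀ o, H.tgtEdge (mapNA o) = mapA (G.tgtEdge o)
  etale_in : ∀ (x : G.N) (m' : H.AN), H.srcNode m' = mapN x →
      ∃! m : G.AN, G.srcNode m = x ∧ mapAN m = m'
  etale_out : ∀ (x : G.N) (o' : H.NA), H.tgtNode o' = mapN x →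
      ∃! o : G.NA, G.tgtNode o = x ∧ mapNA o = o'

/-- `f : G → H` is a map over `P` with respect to etale maps `p : G → P`, `q : H → P`. -/
def GraphMap.OverP {G H : AinoaGraph} {P : PetriNet} (f : GraphMap G H)
    (p : EtaleMap G P) (q : EtaleMap H P) : Prop :=
  (∀ a, q.mapA (f.mapA a) = p.mapA a) ∧
  (∀ m, q.mapI (f.mapAN m) = p.mapI m) ∧
  (∀ x, q.mapN (f.mapN x) = p.mapN x) ∧
  (∀ o, q.mapO (f.mapNA o) = p.mapO o)

/-- The gluing relation on edges of `G₁ ⊔ G₂` identifying `m₁ x` with `m₂ x`. -/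
def glueRel (G₁ G₂ : AinoaGraph) {M : Type} (m₁ : M → G₁.A) (m₂ : M → G₂.A) :
    (G₁.A ⊕ G₂.A) → (G₁.A ⊕ G₂.A) → Prop :=
  fun x y => ∃ m : M, x = Sum.inl (m₁ m) ∧ y = Sum.inr (m₂ m)

open Classical in
/-- Normal form for the glue relation: send `inl (m₁ m)` to `inr (m₂ m)`. -/
noncomputable def glueNorm (G₁ G₂ : AinoaGraph) {M : Type} (m₁ : M → G₁.A) (m₂ : M → G₂.A) :
    (G₁.A ⊕ G₂.A) → (G₁.A ⊕ G₂.A)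
  | Sum.inl a => if h : ∃ m, m₁ m = a then Sum.inr (m₂ h.choose) else Sum.inl a
  | Sum.inr b => Sum.inr b

theorem glueNorm_respects (G₁ G₂ : AinoaGraph) {M : Type} (m₁ : M → G₁.A) (m₂ : M → G₂.A)
    (hinj₁ : Function.Injective m₁) :
    ∀ x y, glueRel G₁ G₂ m₁ m₂ x y → glueNorm G₁ G₂ m₁ m₂ x = glueNorm G₁ G₂ m₁ m₂ y := by
  rintro x y ⟨m, rfl, rfl⟩
  have h : ∃ m', m₁ m' = m₁ m := ⟨m, rfl⟩
  simp only [glueNorm, dif_pos h]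
  congr 1
  exact congrArg m₂ (hinj₁ h.choose_spec)

theorem glueNorm_of_quot_eq (G₁ G₂ : AinoaGraph) {M : Type} (m₁ : M → G₁.A) (m₂ : M → G₂.A)
    (hinj₁ : Function.Injective m₁) {x y : G₁.A ⊕ G₂.A}
    (h : Quot.mk (glueRel G₁ G₂ m₁ m₂) x = Quot.mk (glueRel G₁ G₂ m₁ m₂) y) :
    glueNorm G₁ G₂ m₁ m₂ x = glueNorm G₁ G₂ m₁ m₂ y := by
  have := congrArg (Quot.lift (glueNorm G₁ G₂ m₁ m₂)
    (glueNorm_respects G₁ G₂ m₁ m₂ hinj₁)) h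
  simpa using this

theorem glue_inl_inl (G₁ G₂ : AinoaGraph) {M : Type} (m₁ : M → G₁.A) (m₂ : M → G₂.A)
    (hinj₁ : Function.Injective m₁) (hinj₂ : Function.Injective m₂) {a a' : G₁.A}
    (h : Quot.mk (glueRel G₁ G₂ m₁ m₂) (Sum.inl a) = Quot.mk (glueRel G₁ G₂ m₁ m₂) (Sum.inl a')) :
    a = a' := by
  have h' := glueNorm_of_quot_eq G₁ G₂ m₁ m₂ hinj₁ h
  simp only [glueNorm] at h'
  by_cases h1 : ∃ m, m₁ m = a <;> by_cases h2 : ∃ m, m₁ m = a'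
  · rw [dif_pos h1, dif_pos h2] at h'
    rw [← h1.choose_spec, ← h2.choose_spec]
    exact congrArg m₁ (hinj₂ (Sum.inr.inj h'))
  · rw [dif_pos h1, dif_neg h2] at h'; exact absurd h' (by simp)
  · rw [dif_neg h1, dif_pos h2] at h'; exact absurd h' (by simp)
  · rw [dif_neg h1, dif_neg h2] at h'; exact Sum.inl.inj h'

theorem glue_inl_inr (G₁ G₂ : AinoaGraph) {M : Type} (m₁ : M → G₁.A) (m₂ : M → G₂.A)
    (hinj₁ : Function.Injective m₁) {a : G₁.A} {b : G₂.A}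
    (h : Quot.mk (glueRel G₁ G₂ m₁ m₂) (Sum.inl a) = Quot.mk (glueRel G₁ G₂ m₁ m₂) (Sum.inr b)) :
    ∃ m, m₁ m = a ∧ m₂ m = b := by
  have h' := glueNorm_of_quot_eq G₁ G₂ m₁ m₂ hinj₁ h
  simp only [glueNorm] at h'
  by_cases h1 : ∃ m, m₁ m = a
  · rw [dif_pos h1] at h'
    exact ⟨h1.choose, h1.choose_spec, Sum.inr.inj h'⟩
  · rw [dif_neg h1] at h'; exact absurd h' (by simp)

theorem glue_inr_inr (G₁ G₂ : AinoaGraph) {M : Type} (m₁ : M → G₁.A) (m₂ : M → G₂.A)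
    (hinj₁ : Function.Injective m₁) {b b' : G₂.A}
    (h : Quot.mk (glueRel G₁ G₂ m₁ m₂) (Sum.inr b) = Quot.mk (glueRel G₁ G₂ m₁ m₂) (Sum.inr b')) :
    b = b' := by
  have h' := glueNorm_of_quot_eq G₁ G₂ m₁ m₂ hinj₁ h
  simpa [glueNorm] using h'

/-- Gluing two acyclic graphs along a nodeless graph `M` embedded in the
out-boundary of `G₁` and the in-boundary of `G₂`: the componentwise pushout
`G₁ ⊔_M G₂` is again a graph (its outer maps are injective); and if `M` is the
full out-boundary of `G₁` and full in-boundary of `G₂`, then the in-boundary of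
the pushout is (the image of) the in-boundary of `G₁` and its out-boundary is
(the image of) the out-boundary of `G₂`. -/
theorem pushout_of_graphs_is_graph (G₁ G₂ : AinoaGraph)
    (hac₁ : G₁.Acyclic) (hac₂ : G₂.Acyclic)
    {M : Type} [Finite M] (m₁ : M → G₁.A) (m₂ : M → G₂.A)
    (hinj₁ : Function.Injective m₁) (hinj₂ : Function.Injective m₂)
    (hout : ∀ x : M, m₁ x ∈ G₁.outBoundary) (hin : ∀ x : M, m₂ x ∈ G₂.inBoundary) :
    Function.Injective
      (Sum.elim
        (fun e : G₁.AN => Quot.mk (glueRel G₁ G₂ m₁ m₂) (Sum.inl (G₁.srcEdge e)))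
        (fun e : G₂.AN => Quot.mk (glueRel G₁ G₂ m₁ m₂) (Sum.inr (G₂.srcEdge e)))) ∧
    Function.Injective
      (Sum.elim
        (fun e : G₁.NA => Quot.mk (glueRel G₁ G₂ m₁ m₂) (Sum.inl (G₁.tgtEdge e)))
        (fun e : G₂.NA => Quot.mk (glueRel G₁ G₂ m₁ m₂) (Sum.inr (G₂.tgtEdge e)))) ∧
    (Set.range m₁ = G₁.outBoundary → Set.range m₂ = G₂.inBoundary →
      ({q | q ∉ Set.range (Sum.elim
          (fun e : G₁.NA => Quot.mk (glueRel G₁ G₂ m₁ m₂) (Sum.inl (G₁.tgtEdge e)))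
          (fun e : G₂.NA => Quot.mk (glueRel G₁ G₂ m₁ m₂) (Sum.inr (G₂.tgtEdge e))))}
        = (fun a : G₁.A => Quot.mk (glueRel G₁ G₂ m₁ m₂) (Sum.inl a)) '' G₁.inBoundary) ∧
      ({q | q ∉ Set.range (Sum.elim
          (fun e : G₁.AN => Quot.mk (glueRel G₁ G₂ m₁ m₂) (Sum.inl (G₁.srcEdge e)))
          (fun e : G₂.AN => Quot.mk (glueRel G₁ G₂ m₁ m₂) (Sum.inr (G₂.srcEdge e))))}
        = (fun a : G₂.A => Quot.mk (glueRel G₁ G₂ m₁ m₂) (Sum.inr a)) '' G₂.outBoundary)) := by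
  refine ⟨?_, ?_, ?_⟩
  · rintro (e | e) (e' | e') h <;> simp only [Sum.elim_inl, Sum.elim_inr] at h
    · exact congrArg Sum.inl (G₁.inj_srcEdge (glue_inl_inl G₁ G₂ m₁ m₂ hinj₁ hinj₂ h))
    · obtain ⟨m, hm, -⟩ := glue_inl_inr G₁ G₂ m₁ m₂ hinj₁ h
      exact absurd ⟨e, hm.symm⟩ (hout m)
    · obtain ⟨m, hm, -⟩ := glue_inl_inr G₁ G₂ m₁ m₂ hinj₁ h.symm
      exact absurd ⟨e', hm.symm⟩ (hout m)
    · exact congrArg Sum.inr (G₂.inj_srcEdge (glue_inr_inr G₁ G₂ m₁ m₂ hinj₁ h))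
  · rintro (e | e) (e' | e') h <;> simp only [Sum.elim_inl, Sum.elim_inr] at h
    · exact congrArg Sum.inl (G₁.inj_tgtEdge (glue_inl_inl G₁ G₂ m₁ m₂ hinj₁ hinj₂ h))
    · obtain ⟨m, -, hm⟩ := glue_inl_inr G₁ G₂ m₁ m₂ hinj₁ h
      exact absurd ⟨e', hm.symm⟩ (hin m)
    · obtain ⟨m, -, hm⟩ := glue_inl_inr G₁ G₂ m₁ m₂ hinj₁ h.symm
      exact absurd ⟨e, hm.symm⟩ (hin m)
    · exact congrArg Sum.inr (G₂.inj_tgtEdge (glue_inr_inr G₁ G₂ m₁ m₂ hinj₁ h))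
  · intro hr₁ hr₂
    constructor
    · ext q
      simp only [Set.mem_setOf_eq, Set.mem_image]
      constructor
      · intro hq
        obtain ⟨x, rfl⟩ := Quot.exists_rep q
        rcases x with a | b
        · refine ⟨a, ?_, rfl⟩
          rintro ⟨e, he⟩
          exact hq ⟨Sum.inl e, by simp [← he]⟩
        · have hb : b ∈ G₂.inBoundary := by
            rintro ⟨e, he⟩
            exact hq ⟨Sum.inr e, by simp [← he]⟩
          rw [← hr₂] at hb
          obtain ⟨m, rfl⟩ := hb
          refine ⟨m₁ m, ?_, (Quot.sound ⟨m, rfl, rfl⟩)⟩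
          rintro ⟨e, he⟩
          exact hq ⟨Sum.inl e, by rw [Sum.elim_inl, he]; exact Quot.sound ⟨m, rfl, rfl⟩⟩
      · rintro ⟨a, ha, rfl⟩ ⟨(e | e), he⟩ <;> simp only [Sum.elim_inl, Sum.elim_inr] at he
        · exact ha ⟨e, glue_inl_inl G₁ G₂ m₁ m₂ hinj₁ hinj₂ he⟩
        · obtain ⟨m, -, hm⟩ := glue_inl_inr G₁ G₂ m₁ m₂ hinj₁ he.symm
          exact hin m ⟨e, hm.symm⟩
    · ext q
      simp only [Set.mem_setOf_eq, Set.mem_image]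
      constructor
      · intro hq
        obtain ⟨x, rfl⟩ := Quot.exists_rep q
        rcases x with a | b
        · have ha : a ∈ G₁.outBoundary := by
            rintro ⟨e, he⟩
            exact hq ⟨Sum.inl e, by simp [← he]⟩
          rw [← hr₁] at ha
          obtain ⟨m, rfl⟩ := ha
          refine ⟨m₂ m, ?_, (Quot.sound ⟨m, rfl, rfl⟩).symm⟩
          rintro ⟨e, he⟩
          exact hq ⟨Sum.inr e, by rw [Sum.elim_inr, he]; exact (Quot.sound ⟨m, rfl, rfl⟩).symm⟩
        · refine ⟨b, ?_, rfl⟩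
          rintro ⟨e, he⟩
          exact hq ⟨Sum.inr e, by simp [← he]⟩
      · rintro ⟨b, hb, rfl⟩ ⟨(e | e), he⟩ <;> simp only [Sum.elim_inl, Sum.elim_inr] at he
        · obtain ⟨m, hm, -⟩ := glue_inl_inr G₁ G₂ m₁ m₂ hinj₁ he
          exact hout m ⟨e, hm.symm⟩
        · exact hb ⟨e, glue_inr_inr G₁ G₂ m₁ m₂ hinj₁ he⟩
end

section
/- Let G be a finite acyclic graph with node set N and let f : N → Fin 2 be a strict level function. Define G₁ to be the sub-graph spanned by the nodes in f⁻¹(0) together with all their incident edges and the in-boundary of G, and G₂ the sub-graph spanned by f⁻¹(1), their incident edges, and the out-boundary of G. Then the out-boundary of G₁ equals the in-boundary of G₂ (as subsets of the edge set of G), and the square with this common nodeless graph M mapping to G₁ and G₂, and G₁, G₂ mapping to G, is both a pullback and a pushout (computed componentwise in finite sets). -/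
/-- The edge set of the first layer `G₁` determined by a 2-level function:
the in-boundary of `G` together with all edges incident to level-0 nodes. -/
def layerA₁ (G : AinoaGraph) (f : G.N → Fin 2) : Set G.A :=
  G.inBoundary ∪ G.srcEdge '' {m | f (G.srcNode m) = 0} ∪
    G.tgtEdge '' {o | f (G.tgtNode o) = 0}

/-- The edge set of the second layer `G₂`: the out-boundary of `G` together with
all edges incident to level-1 nodes. -/
def layerA₂ (G : AinoaGraph) (f : G.N → Fin 2) : Set G.A :=
  G.outBoundary ∪ G.srcEdge '' {m | f (G.srcNode m) = 1} ∪
    G.tgtEdge '' {o | f (G.tgtNode o) = 1}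

/-- Cutting an acyclic graph along a strict 2-level function: the out-boundary
of the first layer equals the in-boundary of the second layer (the cut `M`),
and the resulting square of subgraphs is componentwise both a pullback
(intersections) and a pushout (unions): `A₁ ∩ A₂ = M`, `A₁ ∪ A₂ = A`, and the
node- and incidence-components split disjointly. -/
theorem cut_along_level_function (G : AinoaGraph) (hac : G.Acyclic)
    (f : G.N → Fin 2)
    (hstrict : ∀ (o : G.NA) (i : G.AN),
      G.tgtEdge o = G.srcEdge i → f (G.tgtNode o) < f (G.srcNode i)) :
    (layerA₁ G f \ G.srcEdge '' {m | f (G.srcNode m) = 0}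
      = layerA₂ G f \ G.tgtEdge '' {o | f (G.tgtNode o) = 1}) ∧
    (layerA₁ G f ∩ layerA₂ G f
      = layerA₁ G f \ G.srcEdge '' {m | f (G.srcNode m) = 0}) ∧
    (layerA₁ G f ∪ layerA₂ G f = Set.univ) ∧
    ({x : G.N | f x = 0} ∩ {x | f x = 1} = ∅) ∧
    ({x : G.N | f x = 0} ∪ {x | f x = 1} = Set.univ) ∧
    ({m : G.AN | f (G.srcNode m) = 0} ∩ {m | f (G.srcNode m) = 1} = ∅) ∧
    ({m : G.AN | f (G.srcNode m) = 0} ∪ {m | f (G.srcNode m) = 1} = Set.univ) ∧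
    ({o : G.NA | f (G.tgtNode o) = 0} ∩ {o | f (G.tgtNode o) = 1} = ∅) ∧
    ({o : G.NA | f (G.tgtNode o) = 0} ∪ {o | f (G.tgtNode o) = 1} = Set.univ) := by

  have fin2 : ∀ v : Fin 2, v = 0 ∨ v = 1 := by omega
  have flt : ∀ v w : Fin 2, v < w → v = 0 ∧ w = 1 := by omega
  -- helper: membership characterizations
  constructor
  · ext a
    simp only [layerA₁, layerA₂, Set.mem_diff, Set.mem_union, Set.mem_image,
      Set.mem_setOf_eq, AinoaGraph.inBoundary, AinoaGraph.outBoundary, Set.mem_range]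
    constructor
    · rintro ⟨h1, h2⟩
      have h1' : (¬ ∃ o, G.tgtEdge o = a) ∨ ∃ o, f (G.tgtNode o) = 0 ∧ G.tgtEdge o = a := by
        rcases h1 with (h | ⟨m, hm, hma⟩) | h
        · exact Or.inl (by simpa [Set.mem_setOf_eq] using h)
        · exact absurd ⟨m, hm, hma⟩ h2
        · exact Or.inr h
      rcases h1' with h | ⟨o, ho, hoa⟩
      · refine ⟨?_, fun ⟨o, _, hoa⟩ => h ⟨o, hoa⟩⟩
        by_cases hr : ∃ m, G.srcEdge m = a
        · obtain ⟨m, hm⟩ := hr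
          have : f (G.srcNode m) = 1 := by
            rcases fin2 (f (G.srcNode m)) with h0 | h1
            · exact absurd ⟨m, h0, hm⟩ h2
            · exact h1
          exact Or.inl (Or.inr ⟨m, this, hm⟩)
        · exact Or.inl (Or.inl (by simpa [Set.mem_setOf_eq] using hr))
      · constructor
        · by_cases hr : ∃ m, G.srcEdge m = a
          · obtain ⟨m, hm⟩ := hr
            have := hstrict o m (by rw [hoa, hm])
            obtain ⟨_, h1⟩ := flt _ _ this
            exact Or.inl (Or.inr ⟨m, h1, hm⟩)
          · exact Or.inl (Or.inl (by simpa [Set.mem_setOf_eq] using hr))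
        · rintro ⟨o', ho', hoa'⟩
          have : o' = o := G.inj_tgtEdge (hoa'.trans hoa.symm)
          rw [this, ho] at ho'; exact absurd ho' (by decide)
    · rintro ⟨h1, h2⟩
      have h1' : (¬ ∃ m, G.srcEdge m = a) ∨ ∃ m, f (G.srcNode m) = 1 ∧ G.srcEdge m = a := by
        rcases h1 with (h | ⟨m, hm, hma⟩) | h
        · exact Or.inl (by simpa [Set.mem_setOf_eq] using h)
        · exact Or.inr ⟨m, hm, hma⟩
        · exact absurd h h2
      rcases h1' with h | ⟨m, hm, hma⟩
      · refine ⟨?_, fun ⟨m, _, hma⟩ => h ⟨m, hma⟩⟩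
        by_cases hr : ∃ o, G.tgtEdge o = a
        · obtain ⟨o, ho⟩ := hr
          have : f (G.tgtNode o) = 0 := by
            rcases fin2 (f (G.tgtNode o)) with h0 | h1
            · exact h0
            · exact absurd ⟨o, h1, ho⟩ h2
          exact Or.inr ⟨o, this, ho⟩
        · exact Or.inl (Or.inl (by simpa [Set.mem_setOf_eq] using hr))
      · constructor
        · by_cases hr : ∃ o, G.tgtEdge o = a
          · obtain ⟨o, ho⟩ := hr
            have := hstrict o m (by rw [ho, hma])
            obtain ⟨h0, _⟩ := flt _ _ this
            exact Or.inr ⟨o, h0, ho⟩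
          · exact Or.inl (Or.inl (by simpa [Set.mem_setOf_eq] using hr))
        · rintro ⟨m', hm', hma'⟩
          have : m' = m := G.inj_srcEdge (hma'.trans hma.symm)
          rw [this, hm] at hm'; exact absurd hm' (by decide)
  refine ⟨?_, ?_, ?_, ?_, ?_, ?_, ?_, ?_⟩
  · ext a
    simp only [layerA₁, layerA₂, Set.mem_inter_iff, Set.mem_diff, Set.mem_union,
      Set.mem_image, Set.mem_setOf_eq, AinoaGraph.inBoundary, AinoaGraph.outBoundary, Set.mem_range]
    constructor
    · rintro ⟨h1, h2⟩
      refine ⟨h1, ?_⟩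
      rintro ⟨m, hm, hma⟩
      rcases h2 with (h | ⟨m', hm', hma'⟩) | ⟨o, ho, hoa⟩
      · exact h ⟨m, hma⟩
      · have : m' = m := G.inj_srcEdge (hma'.trans hma.symm)
        rw [this, hm] at hm'; exact absurd hm' (by decide)
      · have := hstrict o m (by rw [hoa, hma])
        rw [ho, hm] at this; exact absurd this (by decide)
    · rintro ⟨h1, h2⟩
      refine ⟨h1, ?_⟩
      rcases h1 with (h | h) | ⟨o, ho, hoa⟩
      · by_cases hr : ∃ m, G.srcEdge m = a
        · obtain ⟨m, hm⟩ := hr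
          have : f (G.srcNode m) = 1 := by
            rcases fin2 (f (G.srcNode m)) with h0 | h1
            · exact absurd ⟨m, h0, hm⟩ h2
            · exact h1
          exact Or.inl (Or.inr ⟨m, this, hm⟩)
        · exact Or.inl (Or.inl (by simpa [Set.mem_setOf_eq] using hr))
      · exact absurd h h2
      · by_cases hr : ∃ m, G.srcEdge m = a
        · obtain ⟨m, hm⟩ := hr
          have := hstrict o m (by rw [hoa, hm])
          obtain ⟨_, h1⟩ := flt _ _ this
          exact Or.inl (Or.inr ⟨m, h1, hm⟩)
        · exact Or.inl (Or.inl (by simpa [Set.mem_setOf_eq] using hr))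
  · ext a
    simp only [layerA₁, layerA₂, Set.mem_union, Set.mem_image, Set.mem_setOf_eq,
      AinoaGraph.inBoundary, AinoaGraph.outBoundary, Set.mem_range, Set.mem_univ, iff_true]
    by_cases hr : ∃ m, G.srcEdge m = a
    · obtain ⟨m, hm⟩ := hr
      rcases fin2 (f (G.srcNode m)) with h0 | h1
      · exact Or.inl (Or.inl (Or.inr ⟨m, h0, hm⟩))
      · exact Or.inr (Or.inl (Or.inr ⟨m, h1, hm⟩))
    · exact Or.inr (Or.inl (Or.inl (by simpa [Set.mem_setOf_eq] using hr)))
  all_goals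
    ext x
    simp only [Set.mem_inter_iff, Set.mem_union, Set.mem_setOf_eq, Set.mem_empty_iff_false,
      Set.mem_univ, iff_false, iff_true]
    omega
end

section
/- Let b : P' → P be a cabling map of Petri nets (bijective on transitions and with the two outer squares pullbacks along a map β : S' → S of places) and let p : G → P be a process (an etale map from a finite acyclic graph). Then the componentwise pullback of p along b yields an etale map p' : G' → P' from a graph G': the pulled-back diagram has injective outer maps, and the middle squares of p' are pullbacks. -/
/-- A cabling map of Petri nets `P' → P`: bijective on transitions, with the two
outer squares (at the places) pullbacks along `cS : S' → S`. -/
structure CablingMap (P' P : PetriNet) where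
  cS : P'.S → P.S
  cI : P'.I → P.I
  cT : P'.T → P.T
  cO : P'.O → P.O
  bij_T : Function.Bijective cT
  comm_sI : ∀ i', P.sI (cI i') = cS (P'.sI i')
  comm_tI : ∀ i', P.tI (cI i') = cT (P'.tI i')
  comm_tO : ∀ o', P.tO (cO o') = cT (P'.tO o')
  comm_sO : ∀ o', P.sO (cO o') = cS (P'.sO o')
  pb_in : ∀ (s' : P'.S) (i : P.I), P.sI i = cS s' →
      ∃! i' : P'.I, P'.sI i' = s' ∧ cI i' = i
  pb_out : ∀ (s' : P'.S) (o : P.O), P.sO o = cS s' →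
      ∃! o' : P'.O, P'.sO o' = s' ∧ cO o' = o

/-- Pulling back a process along a cabling map: for a cabling map `b : P' → P`
and a process `p : G → P`, the componentwise pullback `G'` (with components the
fibre products of the components of `G` with those of `P'` over `P`) is again a
graph mapping etale to `P'`: its outer maps are injective, and the middle
squares of the induced map to `P'` are pullbacks. -/
theorem pullback_process_along_cabling (P P' : PetriNet) (c : CablingMap P' P)
    (G : AinoaGraph) (hG : G.Acyclic) (p : EtaleMap G P) :
    Function.Injective
      (fun m : {x : G.AN × P'.I // p.mapI x.1 = c.cI x.2} =>
        (G.srcEdge m.1.1, P'.sI m.1.2)) ∧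
    Function.Injective
      (fun o : {x : G.NA × P'.O // p.mapO x.1 = c.cO x.2} =>
        (G.tgtEdge o.1.1, P'.sO o.1.2)) ∧
    (∀ (n : {x : G.N × P'.T // p.mapN x.1 = c.cT x.2}) (i' : P'.I),
      P'.tI i' = n.1.2 →
      ∃! m : {x : G.AN × P'.I // p.mapI x.1 = c.cI x.2},
        G.srcNode m.1.1 = n.1.1 ∧ m.1.2 = i') ∧
    (∀ (n : {x : G.N × P'.T // p.mapN x.1 = c.cT x.2}) (o' : P'.O),
      P'.tO o' = n.1.2 →
      ∃! m : {x : G.NA × P'.O // p.mapO x.1 = c.cO x.2},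
        G.tgtNode m.1.1 = n.1.1 ∧ m.1.2 = o') := by
  refine ⟨?_, ?_, ?_, ?_⟩
  · rintro ⟨⟨m1, i1⟩, h1⟩ ⟨⟨m2, i2⟩, h2⟩ h
    simp only [Prod.mk.injEq] at h
    obtain ⟨ha, hs⟩ := h
    have hm : m1 = m2 := G.inj_srcEdge ha
    subst hm
    have hci : c.cI i1 = c.cI i2 := by rw [← h1, ← h2]
    obtain ⟨i0, hi0, huniq⟩ := c.pb_in (P'.sI i1) (c.cI i1) (by rw [c.comm_sI])
    have e1 : i1 = i0 := huniq i1 ⟨rfl, rfl⟩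
    have e2 : i2 = i0 := huniq i2 ⟨hs.symm, hci.symm⟩
    simp [e1, e2]
  · rintro ⟨⟨m1, i1⟩, h1⟩ ⟨⟨m2, i2⟩, h2⟩ h
    simp only [Prod.mk.injEq] at h
    obtain ⟨ha, hs⟩ := h
    have hm : m1 = m2 := G.inj_tgtEdge ha
    subst hm
    have hci : c.cO i1 = c.cO i2 := by rw [← h1, ← h2]
    obtain ⟨i0, hi0, huniq⟩ := c.pb_out (P'.sO i1) (c.cO i1) (by rw [c.comm_sO])
    have e1 : i1 = i0 := huniq i1 ⟨rfl, rfl⟩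
    have e2 : i2 = i0 := huniq i2 ⟨hs.symm, hci.symm⟩
    simp [e1, e2]
  · rintro ⟨⟨x, t⟩, hn⟩ i' hi'
    obtain ⟨m, ⟨hm1, hm2⟩, huniq⟩ := p.etale_in x (c.cI i')
      (by rw [c.comm_tI, hi', ← hn])
    refine ⟨⟨(m, i'), hm2⟩, ⟨hm1, rfl⟩, ?_⟩
    rintro ⟨⟨m2, i2⟩, h2⟩ ⟨hs, heq⟩
    simp only at hs heq
    subst heq
    have : m2 = m := huniq m2 ⟨hs, h2⟩
    simp [this]
  · rintro ⟨⟨x, t⟩, hn⟩ o' ho'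
    obtain ⟨m, ⟨hm1, hm2⟩, huniq⟩ := p.etale_out x (c.cO o')
      (by rw [c.comm_tO, ho', ← hn])
    refine ⟨⟨(m, o'), hm2⟩, ⟨hm1, rfl⟩, ?_⟩
    rintro ⟨⟨m2, o2⟩, h2⟩ ⟨hs, heq⟩
    simp only at hs heq
    subst heq
    have : m2 = m := huniq m2 ⟨hs, h2⟩
    simp [this]
end
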